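/- Let U be a series-parallel pomset over a finite alphabet Σ. Then exactly one of the following holds: (i) U is the empty pomset, (ii) U is primitive (i.e., a single labelled event), (iii) U is sequential (i.e., U = U₁ · U₂ for non-empty pomsets U₁, U₂), or (iv) U is parallel (i.e., U = U₁ ∥ U₂ for non-empty pomsets U₁, U₂). -/

import Mathlib

namespace WBKA

/-- Series-parallel terms over an alphabet `A`. -/
inductive SPTerm (A : Type) : Type
  | one : SPTerm A
  | atom : A → SPTerm A
  | seq : SPTerm A → SPTerm A → SPTerm A
  | par : SPTerm A → SPTerm A → SPTerm A

/-- The congruence generated by the series-parallel pomset axioms: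
associativity of both compositions, commutativity of parallel composition,
and the empty pomset acting as unit for both. -/
inductive SPEquiv {A : Type} : SPTerm A → SPTerm A → Prop
  | refl (u : SPTerm A) : SPEquiv u u
  | symm {u v : SPTerm A} : SPEquiv u v → SPEquiv v u
  | trans {u v w : SPTerm A} : SPEquiv u v → SPEquiv v w → SPEquiv u w
  | seqCongr {u u' v v' : SPTerm A} :
      SPEquiv u u' → SPEquiv v v' → SPEquiv (u.seq v) (u'.seq v')
  | parCongr {u u' v v' : SPTerm A} :
      SPEquiv u u' → SPEquiv v v' → SPEquiv (u.par v) (u'.par v')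
  | seqAssoc (u v w : SPTerm A) : SPEquiv ((u.seq v).seq w) (u.seq (v.seq w))
  | parAssoc (u v w : SPTerm A) : SPEquiv ((u.par v).par w) (u.par (v.par w))
  | parComm (u v : SPTerm A) : SPEquiv (u.par v) (v.par u)
  | seqOneLeft (u : SPTerm A) : SPEquiv (SPTerm.one.seq u) u
  | seqOneRight (u : SPTerm A) : SPEquiv (u.seq SPTerm.one) u
  | parOne (u : SPTerm A) : SPEquiv (u.par SPTerm.one) u

instance spSetoid (A : Type) : Setoid (SPTerm A) :=
  ⟨SPEquiv, SPEquiv.refl, SPEquiv.symm, SPEquiv.trans⟩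

/-- Series-parallel pomsets over `A`, as the free algebra on the sp-pomset axioms. -/
def Pomset (A : Type) : Type := Quotient (spSetoid A)

namespace Pomset

variable {A : Type}

def mk (u : SPTerm A) : Pomset A := Quotient.mk (spSetoid A) u

/-- The empty pomset `1`. -/
def eps : Pomset A := mk SPTerm.one

/-- The primitive pomset consisting of a single event labelled `a`. -/
def atom (a : A) : Pomset A := mk (SPTerm.atom a)

/-- Sequential composition of pomsets. -/
def seq : Pomset A → Pomset A → Pomset A :=
  Quotient.lift₂ (fun u v => mk (u.seq v))
    (fun _ _ _ _ hu hv => Quotient.sound (SPEquiv.seqCongr hu hv))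

/-- Parallel composition of pomsets. -/
def par : Pomset A → Pomset A → Pomset A :=
  Quotient.lift₂ (fun u v => mk (u.par v))
    (fun _ _ _ _ hu hv => Quotient.sound (SPEquiv.parCongr hu hv))

/-- `U` is the empty pomset. -/
def IsEmptyP (U : Pomset A) : Prop := U = eps

/-- `U` is primitive: it consists of a single labelled event. -/
def Primitive (U : Pomset A) : Prop := ∃ a : A, U = atom a

/-- `U` is sequential: a sequential composition of two non-empty pomsets. -/
def Sequential (U : Pomset A) : Prop :=
  ∃ V W : Pomset A, V ≠ eps ∧ W ≠ eps ∧ U = seq V W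

/-- `U` is parallel: a parallel composition of two non-empty pomsets. -/
def Parallel (U : Pomset A) : Prop :=
  ∃ V W : Pomset A, V ≠ eps ∧ W ≠ eps ∧ U = par V W

/-- `U` is a sequential prime. -/
def SeqPrime (U : Pomset A) : Prop :=
  U ≠ eps ∧ ∀ V W : Pomset A, U = seq V W → V = eps ∨ W = eps

/-- `U` is a parallel prime. -/
def ParPrime (U : Pomset A) : Prop :=
  U ≠ eps ∧ ∀ V W : Pomset A, U = par V W → V = eps ∨ W = eps

/-- Sequential product of a list of pomsets. -/
def seqProd (l : List (Pomset A)) : Pomset A := l.foldr seq eps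

/-- Parallel product of a list of pomsets. -/
def parProd (l : List (Pomset A)) : Pomset A := l.foldr par eps

end Pomset

/-- Pointwise sequential composition of pomset languages. -/
def langSeq {A : Type} (L M : Set (Pomset A)) : Set (Pomset A) :=
  Set.image2 Pomset.seq L M

/-- Pointwise parallel composition of pomset languages. -/
def langPar {A : Type} (L M : Set (Pomset A)) : Set (Pomset A) :=
  Set.image2 Pomset.par L M

/-- `n`-fold sequential power of a language. -/
def langPow {A : Type} (L : Set (Pomset A)) : ℕ → Set (Pomset A)
  | 0 => {Pomset.eps}
  | n + 1 => langSeq L (langPow L n)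

/-- Kleene closure of a pomset language. -/
def langStar {A : Type} (L : Set (Pomset A)) : Set (Pomset A) :=
  ⋃ n : ℕ, langPow L n

/-- Series-rational expressions over `A`. -/
inductive SR (A : Type) : Type
  | zero : SR A
  | one : SR A
  | atom : A → SR A
  | plus : SR A → SR A → SR A
  | seq : SR A → SR A → SR A
  | par : SR A → SR A → SR A
  | star : SR A → SR A

/-- The sp-language semantics of series-rational expressions. -/
def sem {A : Type} : SR A → Set (Pomset A)
  | .zero => ∅
  | .one => {Pomset.eps}
  | .atom a => {Pomset.atom a}
  | .plus e f => sem e ∪ sem f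
  | .seq e f => langSeq (sem e) (sem f)
  | .par e f => langPar (sem e) (sem f)
  | .star e => langStar (sem e)

/-- The syntactic predicate `F` characterising acceptance of the empty pomset. -/
inductive EF {A : Type} : SR A → Prop
  | one : EF SR.one
  | plusLeft {e : SR A} (f : SR A) : EF e → EF (SR.plus e f)
  | plusRight (e : SR A) {f : SR A} : EF f → EF (SR.plus e f)
  | seq {e f : SR A} : EF e → EF f → EF (SR.seq e f)
  | par {e f : SR A} : EF e → EF f → EF (SR.par e f)
  | star (e : SR A) : EF (SR.star e)

/-- Pomset automata. -/
structure PA (A : Type) (Q : Type) where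
  acc : Set Q
  δ : Q → A → Set Q
  γ : Q → Multiset Q → Set Q

/-- The run relation of a pomset automaton. -/
inductive Run {A Q : Type} (M : PA A Q) : Q → Pomset A → Q → Prop
  | triv (q : Q) : Run M q Pomset.eps q
  | seqUnit {q : Q} {a : A} {q' : Q} :
      q' ∈ M.δ q a → Run M q (Pomset.atom a) q'
  | comp {q : Q} {U : Pomset A} {q'' : Q} {V : Pomset A} {q' : Q} :
      Run M q U q'' → Run M q'' V q' → Run M q (U.seq V) q'
  | parUnit {q q' : Q} (l : List (Q × Pomset A × Q)) :
      q' ∈ M.γ q (↑(l.map Prod.fst) : Multiset Q) →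
      (∀ x ∈ l, x.2.2 ∈ M.acc) →
      (∀ x ∈ l, Run M x.1 x.2.1 x.2.2) →
      Run M q (Pomset.parProd (l.map fun x => x.2.1)) q'

/-- Language of a state of a pomset automaton. -/
def PA.lang {A Q : Type} (M : PA A Q) (q : Q) : Set (Pomset A) :=
  {U | ∃ q' ∈ M.acc, Run M q U q'}

/-- The triple `q →^U q'` matches the trivial-run rule. -/
def TrivialRun {A Q : Type} (_M : PA A Q) (q : Q) (U : Pomset A) (q' : Q) : Prop :=
  U = Pomset.eps ∧ q = q'

/-- `q →^U q'` is a sequential unit run. -/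
def SeqUnitRun {A Q : Type} (M : PA A Q) (q : Q) (U : Pomset A) (q' : Q) : Prop :=
  ∃ a : A, U = Pomset.atom a ∧ q' ∈ M.δ q a

/-- `q →^U q'` is a parallel unit run. -/
def ParUnitRun {A Q : Type} (M : PA A Q) (q : Q) (U : Pomset A) (q' : Q) : Prop :=
  ∃ l : List (Q × Pomset A × Q),
    q' ∈ M.γ q (↑(l.map Prod.fst) : Multiset Q) ∧
    (∀ x ∈ l, x.2.2 ∈ M.acc ∧ Run M x.1 x.2.1 x.2.2) ∧
    U = Pomset.parProd (l.map fun x => x.2.1)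

/-- `q →^U q'` is a unit run: a sequential or a parallel unit run. -/
def UnitRun {A Q : Type} (M : PA A Q) (q : Q) (U : Pomset A) (q' : Q) : Prop :=
  SeqUnitRun M q U q' ∨ ParUnitRun M q U q'

/-- `q →^U q'` is a composite run: a sequential composition of two non-trivial runs. -/
def CompositeRun {A Q : Type} (M : PA A Q) (q : Q) (U : Pomset A) (q' : Q) : Prop :=
  ∃ (V W : Pomset A) (q'' : Q),
    U = V.seq W ∧ Run M q V q'' ∧ Run M q'' W q' ∧
    ¬ TrivialRun M q V q'' ∧ ¬ TrivialRun M q'' W q'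

/-- The support preorder: `Supports M q' q` means `q' ⪯ q`. -/
inductive Supports {A Q : Type} (M : PA A Q) : Q → Q → Prop
  | refl (q : Q) : Supports M q q
  | trans {q r p : Q} : Supports M q r → Supports M r p → Supports M q p
  | deltaStep {q : Q} {a : A} {q' : Q} : q' ∈ M.δ q a → Supports M q' q
  | gammaStep {q : Q} {φ : Multiset Q} {q' : Q} : q' ∈ M.γ q φ → Supports M q' q
  | forkStep {q : Q} {φ : Multiset Q} {r : Q} :
      r ∈ φ → (M.γ q φ).Nonempty → Supports M r q

/-- A pomset automaton is fork-acyclic when every fork target `r` of `q`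
satisfies `r ≺ q`, i.e. `q ⋠ r`. -/
def ForkAcyclic {A Q : Type} (M : PA A Q) : Prop :=
  ∀ (q : Q) (φ : Multiset Q) (r : Q),
    r ∈ φ → (M.γ q φ).Nonempty → ¬ Supports M q r

/-- A set of states is support-closed. -/
def SupportClosed {A Q : Type} (M : PA A Q) (S : Set Q) : Prop :=
  ∀ q ∈ S, ∀ q' : Q, Supports M q' q → q' ∈ S

/-- Restriction of a pomset automaton to a set of states. -/
def PA.restrict {A Q : Type} (M : PA A Q) (S : Set Q) : PA A {q : Q // q ∈ S} where
  acc := {q | q.val ∈ M.acc}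
  δ := fun q a => {r | r.val ∈ M.δ q.val a}
  γ := fun q φ => {r | r.val ∈ M.γ q.val (φ.map Subtype.val)}

/-- `n`-forking automata. -/
def NForking {A Q : Type} (M : PA A Q) (n : ℕ) : Prop :=
  ∀ (q : Q) (φ : Multiset Q), (M.γ q φ).Nonempty → n ≤ Multiset.card φ

/-- Parsimonious automata: no fork target accepts the empty pomset. -/
def Parsimonious {A Q : Type} (M : PA A Q) : Prop :=
  ∀ (p : Q) (φ : Multiset Q) (q : Q),
    q ∈ φ → (M.γ p φ).Nonempty → Pomset.eps ∉ M.lang q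

/-- Flat-branching automata: forks from fork targets never reach accepting states. -/
def FlatBranching {A Q : Type} (M : PA A Q) : Prop :=
  ∀ (p : Q) (φ : Multiset Q) (q : Q),
    q ∈ φ → (M.γ p φ).Nonempty → ∀ ψ : Multiset Q, M.γ q ψ ∩ M.acc = ∅

/-- Well-structured pomset automata. -/
def WellStructured {A Q : Type} (M : PA A Q) : Prop :=
  (∀ (q : Q) (φ : Multiset Q), (M.γ q φ).Nonempty → 2 ≤ Multiset.card φ) ∧
  ∀ (p : Q) (φ : Multiset Q) (q : Q), q ∈ φ → (M.γ p φ).Nonempty →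
    q ∉ M.acc ∧ ∀ ψ : Multiset Q, M.γ q ψ ∩ M.acc = ∅

/-- The relation `⇝` characterising runs labelled by the empty pomset. -/
inductive Leadsto {A Q : Type} (M : PA A Q) : Q → Q → Prop
  | refl (p : Q) : Leadsto M p p
  | trans {p r q : Q} : Leadsto M p r → Leadsto M r q → Leadsto M p q
  | fork {p q : Q} (l : List (Q × Q)) :
      q ∈ M.γ p (↑(l.map Prod.fst) : Multiset Q) →
      (∀ x ∈ l, x.2 ∈ M.acc) →
      (∀ x ∈ l, Leadsto M x.1 x.2) →
      Leadsto M p q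

/-- Concatenate each expression of a set with `f` on the right. -/
def seqAfter {A : Type} (T : Set (SR A)) (f : SR A) : Set (SR A) :=
  (fun g => SR.seq g f) '' T

/-- Antimirov-style sequential derivatives of sr-expressions. -/
def deltaS {A : Type} : SR A → A → Set (SR A)
  | .zero, _ => ∅
  | .one, _ => ∅
  | .atom b, a => {g | g = SR.one ∧ a = b}
  | .plus e f, a => deltaS e a ∪ deltaS f a
  | .seq e f, a => seqAfter (deltaS e a) f ∪ {g | g ∈ deltaS f a ∧ EF e}
  | .par _ _, _ => ∅
  | .star e, a => seqAfter (deltaS e a) (SR.star e)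

/-- Antimirov-style parallel derivatives of sr-expressions. -/
def gammaS {A : Type} : SR A → Multiset (SR A) → Set (SR A)
  | .zero, _ => ∅
  | .one, _ => ∅
  | .atom _, _ => ∅
  | .plus e f, φ => gammaS e φ ∪ gammaS f φ
  | .seq e f, φ => seqAfter (gammaS e φ) f ∪ {g | g ∈ gammaS f φ ∧ EF e}
  | .par e f, φ => {g | g = SR.one ∧ φ = {e, f}}
  | .star e, φ => seqAfter (gammaS e φ) (SR.star e)

/-- The syntactic pomset automaton on sr-expressions. -/
def synPA (A : Type) : PA A (SR A) where
  acc := {e | EF e}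
  δ := deltaS
  γ := gammaS

/-- The parallel-nesting depth of an sr-expression. -/
def pdepth {A : Type} : SR A → ℕ
  | .zero => 0
  | .one => 0
  | .atom _ => 0
  | .plus e f => max (pdepth e) (pdepth f)
  | .seq e f => max (pdepth e) (pdepth f)
  | .par e f => max (pdepth e) (pdepth f) + 1
  | .star e => pdepth e

/-- A substitution `ζ : Σ → 2^{SP(Δ)}` is atomic. -/
def Atomic {A B : Type} (ζ : A → Set (Pomset B)) : Prop :=
  (∀ a : A, ∀ U ∈ ζ a, Pomset.SeqPrime U) ∧
  (∀ a b : A, (ζ a ∩ ζ b).Nonempty ↔ a = b)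

/-- Extension of a substitution to words. -/
def substWord {A B : Type} (ζ : A → Set (Pomset B)) : List A → Set (Pomset B)
  | [] => {Pomset.eps}
  | a :: w => langSeq (ζ a) (substWord ζ w)

/-- Extension of a substitution to word languages. -/
def substLang {A B : Type} (ζ : A → Set (Pomset B)) (L : Set (List A)) :
    Set (Pomset B) :=
  ⋃ w ∈ L, substWord ζ w

/-- `L_A(α)` for a set `α` of states: the atom language of `α`. -/
def atomLang {Q U : Type} (LA : Q → Set U) (α : Set Q) : Set U :=
  (⋂ q ∈ α, LA q) \ (⋃ (q : Q) (_ : q ∉ α), LA q)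


section UniqueKindAux

variable {A : Type}

/-- The number of atoms (events) in a term. -/
def tsize : SPTerm A → ℕ
  | .one => 0
  | .atom _ => 1
  | .seq u v => tsize u + tsize v
  | .par u v => tsize u + tsize v

/-- The number of connected components of the comparability graph. -/
def tnpar : SPTerm A → ℕ
  | .one => 0
  | .atom _ => 1
  | .seq u v => if tsize u = 0 then tnpar v else if tsize v = 0 then tnpar u else 1
  | .par u v => tnpar u + tnpar v

lemma tsize_equiv {u v : SPTerm A} (h : SPEquiv u v) : tsize u = tsize v := by
  induction h <;> simp -failIfUnchanged [tsize] at * <;> omega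

lemma tnpar_zero {u : SPTerm A} (h : tsize u = 0) : tnpar u = 0 := by
  induction u with
  | one => rfl
  | atom a => simp [tsize] at h
  | seq u v ihu ihv =>
      simp only [tsize, Nat.add_eq_zero] at h
      simp [tnpar, h.1, h.2, ihv h.2]
  | par u v ihu ihv =>
      simp only [tsize, Nat.add_eq_zero] at h
      simp [tnpar, ihu h.1, ihv h.2]

lemma tnpar_pos {u : SPTerm A} (h : 0 < tsize u) : 0 < tnpar u := by
  induction u with
  | one => simp [tsize] at h
  | atom a => simp [tnpar]
  | seq u v ihu ihv =>
      simp only [tsize] at h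
      by_cases hu : tsize u = 0
      · simp only [tnpar, if_pos hu]
        exact ihv (by omega)
      · by_cases hv : tsize v = 0
        · simp only [tnpar, if_neg hu, if_pos hv]
          exact ihu (by omega)
        · simp [tnpar, hu, hv]
  | par u v ihu ihv =>
      simp only [tsize] at h
      simp only [tnpar]
      rcases Nat.eq_zero_or_pos (tsize u) with hu | hu
      · have : 0 < tsize v := by omega
        have := ihv this; omega
      · have := ihu hu; omega

lemma tnpar_equiv {u v : SPTerm A} (h : SPEquiv u v) : tnpar u = tnpar v := by
  induction h with
  | refl => rfl
  | symm _ ih => omega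
  | trans _ _ ih₁ ih₂ => omega
  | seqCongr hu hv ihu ihv =>
      simp only [tnpar, tsize_equiv hu, tsize_equiv hv, ihu, ihv]
  | parCongr hu hv ihu ihv => simp only [tnpar, ihu, ihv]
  | seqAssoc u v w =>
      rcases Nat.eq_zero_or_pos (tsize u) with hu | hu <;>
      rcases Nat.eq_zero_or_pos (tsize v) with hv | hv <;>
      rcases Nat.eq_zero_or_pos (tsize w) with hw | hw <;>
      simp_all [tnpar, tsize, Nat.pos_iff_ne_zero]
  | parAssoc u v w => simp [tnpar]; omega
  | parComm u v => simp [tnpar]; omega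
  | seqOneLeft u => simp [tnpar, tsize]
  | seqOneRight u =>
      rcases Nat.eq_zero_or_pos (tsize u) with hu | hu
      · simp [tnpar, tsize, hu, tnpar_zero hu]
      · simp [tnpar, tsize, Nat.pos_iff_ne_zero.mp hu]
  | parOne u => simp [tnpar]

/-- Size lifted to pomsets. -/
def psize : Pomset A → ℕ :=
  Quotient.lift tsize fun _ _ h => tsize_equiv h

/-- Component count lifted to pomsets. -/
def pnpar : Pomset A → ℕ :=
  Quotient.lift tnpar fun _ _ h => tnpar_equiv h

lemma psize_mk (u : SPTerm A) : psize (Pomset.mk u) = tsize u := rfl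

lemma psize_seq (U V : Pomset A) : psize (U.seq V) = psize U + psize V :=
  Quotient.inductionOn₂ U V fun _ _ => rfl

lemma psize_par (U V : Pomset A) : psize (U.par V) = psize U + psize V :=
  Quotient.inductionOn₂ U V fun _ _ => rfl

lemma eps_of_tsize_zero {u : SPTerm A} (h : tsize u = 0) : SPEquiv u SPTerm.one := by
  induction u with
  | one => exact SPEquiv.refl _
  | atom a => simp [tsize] at h
  | seq u v ihu ihv =>
      simp only [tsize, Nat.add_eq_zero] at h
      exact SPEquiv.trans (SPEquiv.seqCongr (ihu h.1) (ihv h.2)) (SPEquiv.seqOneLeft _)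
  | par u v ihu ihv =>
      simp only [tsize, Nat.add_eq_zero] at h
      exact SPEquiv.trans (SPEquiv.parCongr (ihu h.1) (ihv h.2)) (SPEquiv.parOne _)

lemma eps_iff_psize (U : Pomset A) : U = Pomset.eps ↔ psize U = 0 := by
  induction U using Quotient.inductionOn with
  | h u =>
    constructor
    · intro h; rw [h]; rfl
    · intro h
      exact Quotient.sound (eps_of_tsize_zero h)

lemma atom_of_tsize_one {u : SPTerm A} (h : tsize u = 1) :
    ∃ a : A, SPEquiv u (SPTerm.atom a) := by
  induction u with
  | one => simp [tsize] at h
  | atom a => exact ⟨a, SPEquiv.refl _⟩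
  | seq u v ihu ihv =>
      simp only [tsize] at h
      rcases Nat.eq_zero_or_pos (tsize u) with hu | hu
      · obtain ⟨a, ha⟩ := ihv (by omega)
        exact ⟨a, SPEquiv.trans (SPEquiv.trans
          (SPEquiv.seqCongr (eps_of_tsize_zero hu) (SPEquiv.refl v))
          (SPEquiv.seqOneLeft v)) ha⟩
      · have hv : tsize v = 0 := by omega
        obtain ⟨a, ha⟩ := ihu (by omega)
        exact ⟨a, SPEquiv.trans (SPEquiv.trans
          (SPEquiv.seqCongr (SPEquiv.refl u) (eps_of_tsize_zero hv))
          (SPEquiv.seqOneRight u)) ha⟩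
  | par u v ihu ihv =>
      simp only [tsize] at h
      rcases Nat.eq_zero_or_pos (tsize u) with hu | hu
      · obtain ⟨a, ha⟩ := ihv (by omega)
        exact ⟨a, SPEquiv.trans (SPEquiv.trans (SPEquiv.trans (SPEquiv.parComm u v)
          (SPEquiv.parCongr (SPEquiv.refl v) (eps_of_tsize_zero hu)))
          (SPEquiv.parOne v)) ha⟩
      · have hv : tsize v = 0 := by omega
        obtain ⟨a, ha⟩ := ihu (by omega)
        exact ⟨a, SPEquiv.trans (SPEquiv.trans
          (SPEquiv.parCongr (SPEquiv.refl u) (eps_of_tsize_zero hv))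
          (SPEquiv.parOne u)) ha⟩

lemma ne_eps_of_pos {U : Pomset A} (h : 0 < psize U) : U ≠ Pomset.eps := by
  intro he
  rw [eps_iff_psize] at he
  omega

lemma seq_or_par_of_two {u : SPTerm A} (h : 2 ≤ tsize u) :
    Pomset.Sequential (Pomset.mk u) ∨ Pomset.Parallel (Pomset.mk u) := by
  induction u with
  | one => simp [tsize] at h
  | atom a => simp [tsize] at h
  | seq u v ihu ihv =>
      simp only [tsize] at h
      rcases Nat.eq_zero_or_pos (tsize u) with hu | hu
      · have : Pomset.mk (u.seq v) = Pomset.mk v :=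
          Quotient.sound (SPEquiv.trans
            (SPEquiv.seqCongr (eps_of_tsize_zero hu) (SPEquiv.refl v))
            (SPEquiv.seqOneLeft v))
        rw [this]; exact ihv (by omega)
      · rcases Nat.eq_zero_or_pos (tsize v) with hv | hv
        · have : Pomset.mk (u.seq v) = Pomset.mk u :=
            Quotient.sound (SPEquiv.trans
              (SPEquiv.seqCongr (SPEquiv.refl u) (eps_of_tsize_zero hv))
              (SPEquiv.seqOneRight u))
          rw [this]; exact ihu (by omega)
        · exact Or.inl ⟨Pomset.mk u, Pomset.mk v, ne_eps_of_pos hu, ne_eps_of_pos hv, rfl⟩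
  | par u v ihu ihv =>
      simp only [tsize] at h
      rcases Nat.eq_zero_or_pos (tsize u) with hu | hu
      · have : Pomset.mk (u.par v) = Pomset.mk v :=
          Quotient.sound (SPEquiv.trans (SPEquiv.trans (SPEquiv.parComm u v)
            (SPEquiv.parCongr (SPEquiv.refl v) (eps_of_tsize_zero hu)))
            (SPEquiv.parOne v))
        rw [this]; exact ihv (by omega)
      · rcases Nat.eq_zero_or_pos (tsize v) with hv | hv
        · have : Pomset.mk (u.par v) = Pomset.mk u :=
            Quotient.sound (SPEquiv.trans
              (SPEquiv.parCongr (SPEquiv.refl u) (eps_of_tsize_zero hv))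
              (SPEquiv.parOne u))
          rw [this]; exact ihu (by omega)
        · exact Or.inr ⟨Pomset.mk u, Pomset.mk v, ne_eps_of_pos hu, ne_eps_of_pos hv, rfl⟩

lemma psize_pos_of_ne_eps {U : Pomset A} (h : U ≠ Pomset.eps) : 0 < psize U := by
  rcases Nat.eq_zero_or_pos (psize U) with h0 | h0
  · exact absurd ((eps_iff_psize U).mpr h0) h
  · exact h0

lemma psize_of_primitive {U : Pomset A} (h : U.Primitive) : psize U = 1 := by
  obtain ⟨a, rfl⟩ := h; rfl

lemma psize_of_sequential {U : Pomset A} (h : U.Sequential) : 2 ≤ psize U := by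
  obtain ⟨V, W, hV, hW, rfl⟩ := h
  rw [psize_seq]
  have := psize_pos_of_ne_eps hV
  have := psize_pos_of_ne_eps hW
  omega

lemma psize_of_parallel {U : Pomset A} (h : U.Parallel) : 2 ≤ psize U := by
  obtain ⟨V, W, hV, hW, rfl⟩ := h
  rw [psize_par]
  have := psize_pos_of_ne_eps hV
  have := psize_pos_of_ne_eps hW
  omega

lemma pnpar_of_sequential {U : Pomset A} (h : U.Sequential) : pnpar U = 1 := by
  obtain ⟨V, W, hV, hW, rfl⟩ := h
  have hV' := psize_pos_of_ne_eps hV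
  have hW' := psize_pos_of_ne_eps hW
  induction V using Quotient.inductionOn with
  | h v =>
    induction W using Quotient.inductionOn with
    | h w =>
      show tnpar (v.seq w) = 1
      have hv : tsize v ≠ 0 := Nat.pos_iff_ne_zero.mp hV'
      have hw : tsize w ≠ 0 := Nat.pos_iff_ne_zero.mp hW'
      simp [tnpar, hv, hw]

lemma pnpar_of_parallel {U : Pomset A} (h : U.Parallel) : 2 ≤ pnpar U := by
  obtain ⟨V, W, hV, hW, rfl⟩ := h
  have hV' := psize_pos_of_ne_eps hV
  have hW' := psize_pos_of_ne_eps hW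
  induction V using Quotient.inductionOn with
  | h v =>
    induction W using Quotient.inductionOn with
    | h w =>
      show 2 ≤ tnpar (v.par w)
      have := tnpar_pos (u := v) hV'
      have := tnpar_pos (u := w) hW'
      simp only [tnpar]
      omega

end UniqueKindAux

/-- Every series-parallel pomset is exactly one of: empty, primitive,
sequential, or parallel. -/
theorem sp_unique_kind {A : Type} [Fintype A] (U : Pomset A) :
    (U.IsEmptyP ∧ ¬ U.Primitive ∧ ¬ U.Sequential ∧ ¬ U.Parallel) ∨
    (¬ U.IsEmptyP ∧ U.Primitive ∧ ¬ U.Sequential ∧ ¬ U.Parallel) ∨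
    (¬ U.IsEmptyP ∧ ¬ U.Primitive ∧ U.Sequential ∧ ¬ U.Parallel) ∨
    (¬ U.IsEmptyP ∧ ¬ U.Primitive ∧ ¬ U.Sequential ∧ U.Parallel) := by
  rcases Nat.eq_zero_or_pos (psize U) with h0 | hpos
  · left
    refine ⟨(eps_iff_psize U).mpr h0, ?_, ?_, ?_⟩
    · intro h; have := psize_of_primitive h; omega
    · intro h; have := psize_of_sequential h; omega
    · intro h; have := psize_of_parallel h; omega
  · rcases eq_or_lt_of_le (Nat.succ_le_of_lt hpos) with h1 | h2
    · -- psize U = 1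
      right; left
      have h1' : psize U = 1 := h1.symm
      have hprim : U.Primitive := by
        induction U using Quotient.inductionOn with
        | h u =>
          obtain ⟨a, ha⟩ := atom_of_tsize_one (u := u) h1'
          exact ⟨a, Quotient.sound ha⟩
      refine ⟨?_, hprim, ?_, ?_⟩
      · intro h; rw [Pomset.IsEmptyP, eps_iff_psize] at h; omega
      · intro h; have := psize_of_sequential h; omega
      · intro h; have := psize_of_parallel h; omega
    · -- 2 ≤ psize U
      have h2' : 2 ≤ psize U := h2
      have hsp : U.Sequential ∨ U.Parallel := by
        induction U using Quotient.inductionOn with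
        | h u => exact seq_or_par_of_two h2'
      have hne : ¬ U.IsEmptyP := by
        intro h; rw [Pomset.IsEmptyP, eps_iff_psize] at h; omega
      have hnp : ¬ U.Primitive := by
        intro h; have := psize_of_primitive h; omega
      rcases hsp with hs | hp
      · right; right; left
        refine ⟨hne, hnp, hs, ?_⟩
        intro hp
        have := pnpar_of_sequential hs
        have := pnpar_of_parallel hp
        omega
      · right; right; right
        refine ⟨hne, hnp, ?_, hp⟩
        intro hs
        have := pnpar_of_sequential hs
        have := pnpar_of_parallel hp
        omega

end WBKA
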